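/- (Theorem 1, one-step form.) Let L be an invertible n×n real matrix, g ∈ ℝ^n, ḡ = L^{-1} g, α = α(ḡ), and L' = L(I + α ḡḡᵀ). Then (L')^{-1} g = (1 + ‖L^{-1} g‖²)^{-1/2} · L^{-1} g. -/

import Mathlib

open Matrix Finset

/-- The Euclidean norm of a vector in ℝ^n. -/
noncomputable def euclNorm {n : ℕ} (v : Fin n → ℝ) : ℝ :=
  Real.sqrt (∑ i, v i ^ 2)

/-- `α(v) = (√(1 + ‖v‖²) − 1)/‖v‖²` (equal to `0` when `v = 0`). -/
noncomputable def alphaF {n : ℕ} (v : Fin n → ℝ) : ℝ :=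
  (Real.sqrt (1 + euclNorm v ^ 2) - 1) / euclNorm v ^ 2

/-- The rank-one outer product `u wᵀ`. -/
def outer {n : ℕ} (u w : Fin n → ℝ) : Matrix (Fin n) (Fin n) ℝ :=
  Matrix.of fun i j => u i * w j

lemma outer_mul_outer {n : ℕ} (v : Fin n → ℝ) :
    outer v v * outer v v = (∑ i, v i ^ 2) • outer v v := by
  ext i j
  simp only [outer, Matrix.mul_apply, Matrix.smul_apply, Matrix.of_apply, smul_eq_mul]
  rw [Finset.sum_mul]
  apply Finset.sum_congr rfl
  intro k _
  ring

lemma outer_mulVec {n : ℕ} (v : Fin n → ℝ) :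
    (outer v v).mulVec v = (∑ i, v i ^ 2) • v := by
  ext i
  simp only [outer, Matrix.mulVec, Matrix.of_apply, dotProduct, Pi.smul_apply, smul_eq_mul]
  rw [Finset.sum_mul]
  apply Finset.sum_congr rfl
  intro k _
  ring

/-- Theorem 1, one-step form: with `ḡ = L⁻¹ g`, `α = α(ḡ)` and
`L' = L(I + α ḡḡᵀ)`, one has `(L')⁻¹ g = (1 + ‖L⁻¹ g‖²)^{-1/2} · L⁻¹ g`. -/
theorem preconditioned_gradient_one_step {n : ℕ} (L : Matrix (Fin n) (Fin n) ℝ)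
    (hL : IsUnit L.det) (g : Fin n → ℝ) :
    (L * ((1 : Matrix (Fin n) (Fin n) ℝ) +
        alphaF (L⁻¹.mulVec g) • outer (L⁻¹.mulVec g) (L⁻¹.mulVec g)))⁻¹.mulVec g
      = (Real.sqrt (1 + euclNorm (L⁻¹.mulVec g) ^ 2))⁻¹ • L⁻¹.mulVec g := by
  set v := L⁻¹.mulVec g with hv
  set s := ∑ i, v i ^ 2 with hsdef
  have hs0 : 0 ≤ s := Finset.sum_nonneg fun i _ => sq_nonneg _
  have henv : euclNorm v ^ 2 = s := Real.sq_sqrt hs0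
  set r := Real.sqrt (1 + s) with hrdef
  have hgoalr : Real.sqrt (1 + euclNorm v ^ 2) = r := by rw [henv]
  have hrpos : 0 < r := Real.sqrt_pos.mpr (by linarith)
  have hr0 : r ≠ 0 := ne_of_gt hrpos
  have halpha : alphaF v = (r - 1) / s := by
    rw [alphaF, henv, ← hrdef]
  rcases eq_or_ne s 0 with hs | hs
  · -- v = 0
    have hv0 : v = 0 := by
      funext i
      have := (Finset.sum_eq_zero_iff_of_nonneg (fun i _ => sq_nonneg (v i))).mp
        (hsdef ▸ hs) i (Finset.mem_univ i)
      exact pow_eq_zero_iff (by norm_num) |>.mp this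
    have hr1 : r = 1 := by rw [hrdef, hs]; simp
    rw [hgoalr, hr1, hv0]
    have : outer (0 : Fin n → ℝ) 0 = 0 := by ext i j; simp [outer]
    rw [this]
    simp [← hv, hv0]
  · have hspos : 0 < s := lt_of_le_of_ne hs0 (Ne.symm hs)
    set α := alphaF v with hadef
    set β := (1 - r) / (s * r) with hbdef
    set O := outer v v with hO
    have hOO : O * O = s • O := outer_mul_outer v
    have hcoef : α + β + α * β * s = 0 := by
      rw [halpha, hbdef]
      field_simp
      ring
    have key : ∀ (x y : ℝ), ((1 : Matrix (Fin n) (Fin n) ℝ) + x • O) * (1 + y • O)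
        = 1 + (x + y + x * y * s) • O := by
      intro x y
      simp only [add_mul, mul_add, one_mul, mul_one, Matrix.mul_smul, Matrix.smul_mul,
        hOO, smul_smul]
      module
    have hMN : ((1 : Matrix (Fin n) (Fin n) ℝ) + α • O) * (1 + β • O) = 1 := by
      rw [key, hcoef, zero_smul, add_zero]
    have hinv : ((1 : Matrix (Fin n) (Fin n) ℝ) + α • O)⁻¹ = 1 + β • O :=
      Matrix.inv_eq_right_inv hMN
    rw [Matrix.mul_inv_rev, hinv, ← Matrix.mulVec_mulVec, ← hv]
    rw [Matrix.add_mulVec, Matrix.one_mulVec, Matrix.smul_mulVec, outer_mulVec,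
      ← hsdef, smul_smul, hgoalr]
    have : (1 : ℝ) + β * s = r⁻¹ := by
      rw [hbdef]; field_simp; ring
    rw [← this]
    module
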